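/- Let K be a field of characteristic ≠ 2 of Stufe exactly 2 (i.e., -1 is a sum of two squares but not a square). Then there exist A, B ∈ SL(2,K) with AB = -BA, all of A₂₁, B₂₁, (AB)₂₁, (BA)₂₁ nonzero, and w(A,B) ≠ w(B,A), where w(A,B) = ⟨-A₂₁(AB)₂₁B₂₁⟩ ∈ W(K). Hence the Witt cocycle on PSL(2,K) is not equicommutative. -/

import Mathlib

open MvPolynomial in
/-- Witt's presentation of the Witt ring of a field `K` of characteristic ≠ 2:
generators `⟨a⟩` for `a ∈ K` (with `⟨0⟩ := 0` as a junk value), and the relations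
`⟨1⟩ = 1`, `⟨a⟩⟨b⟩ = ⟨ab⟩`, `⟨ab²⟩ = ⟨a⟩`, `⟨a⟩ + ⟨-a⟩ = 0`, and the Witt relation
`⟨a⟩ + ⟨b⟩ = ⟨a+b⟩(1 + ⟨ab⟩)` for `a + b ≠ 0`. -/
inductive WittRel (K : Type) [Field K] :
    MvPolynomial K ℤ → MvPolynomial K ℤ → Prop
  | zero : WittRel K (X (0 : K)) 0
  | one : WittRel K (X (1 : K)) 1
  | mul (a b : K) : WittRel K (X a * X b) (X (a * b))
  | sq (a b : K) (hb : b ≠ 0) : WittRel K (X (a * b ^ 2)) (X a)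
  | neg (a : K) (ha : a ≠ 0) : WittRel K (X a + X (-a)) 0
  | add (a b : K) (ha : a ≠ 0) (hb : b ≠ 0) (hab : a + b ≠ 0) :
      WittRel K (X a + X b) (X (a + b) * (1 + X (a * b)))

/-- The Witt ring `W(K)` of a field of characteristic ≠ 2, via Witt's presentation. -/
abbrev WittRing (K : Type) [Field K] := RingQuot (WittRel K)

/-- The class `⟨a⟩ ∈ W(K)` of the rank-one form with value `a` (junk value `0` at `a = 0`). -/
noncomputable def WittGen (K : Type) [Field K] (a : K) : WittRing K :=
  RingQuot.mkRingHom (WittRel K) (MvPolynomial.X a)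

/-- The fundamental ideal `I(K)` of even-dimensional forms, generated by the
binary forms `⟨1, a⟩ = 1 + ⟨a⟩`. -/
noncomputable def fundamentalIdeal (K : Type) [Field K] : Ideal (WittRing K) :=
  Ideal.span {x | ∃ a : K, a ≠ 0 ∧ x = 1 + WittGen K a}

noncomputable section WittAux

open MvPolynomial

/-- The group of square classes of `K`, written additively. -/
abbrev SqClass (K : Type) [Field K] : Type :=
  Additive (Kˣ ⧸ (powMonoidHom 2 : Kˣ →* Kˣ).range)

theorem sqClass_sq_eq_one (K : Type) [Field K] (x : Kˣ) :
    ((x ^ 2 : Kˣ) : Kˣ ⧸ (powMonoidHom 2 : Kˣ →* Kˣ).range) = 1 :=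
  (QuotientGroup.eq_one_iff _).mpr ⟨x, rfl⟩

instance (K : Type) [Field K] : Module (ZMod 2) (SqClass K) :=
  AddCommGroup.zmodModule (n := 2) (G := SqClass K) (by
    intro a
    apply Additive.toMul.injective
    rw [toMul_nsmul]
    show (Additive.toMul a) ^ 2 = (1 : Kˣ ⧸ _)
    induction (Additive.toMul a) using QuotientGroup.induction_on with
    | H x => rw [← QuotientGroup.mk_pow]; exact sqClass_sq_eq_one K x)

def uu : ZMod 2 → ZMod 4 := fun x => if x = 0 then 1 else 3

theorem uu_add : ∀ x y : ZMod 2, uu (x + y) = uu x * uu y := by decide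
theorem uu_one_add : ∀ x : ZMod 2, uu (1 + x) = - uu x := by decide
theorem uu_ne_neg : ∀ x : ZMod 2, uu x ≠ - uu x := by decide
theorem uu_witt : ∀ x y z : ZMod 2, uu x + uu y = uu z * (1 + (uu x * uu y)) := by decide
theorem zmod2_eq_one {x : ZMod 2} (h : x ≠ 0) : x = 1 := by revert h; revert x; decide

variable (K : Type) [Field K]

/-- The square class of a unit. -/
def cls (x : Kˣ) : SqClass K :=
  Additive.ofMul (QuotientGroup.mk x : Kˣ ⧸ (powMonoidHom 2 : Kˣ →* Kˣ).range)

theorem cls_mul (x y : Kˣ) : cls K (x * y) = cls K x + cls K y := rfl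

theorem cls_sq (x : Kˣ) : cls K (x ^ 2) = 0 :=
  congrArg Additive.ofMul (sqClass_sq_eq_one K x)

theorem cls_one : cls K 1 = 0 := by
  have := cls_sq K 1
  rwa [one_pow] at this

variable (φ : Module.Dual (ZMod 2) (SqClass K))

/-- The auxiliary multiplicative map `K → ℤ/4` attached to a functional on square classes. -/
def gfun : K → ZMod 4 := fun a =>
  letI := Classical.decEq K
  if h : a = 0 then 0 else uu (φ (cls K (Units.mk0 a h)))

theorem gfun_ne (a : K) (h : a ≠ 0) : gfun K φ a = uu (φ (cls K (Units.mk0 a h))) :=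
  dif_neg h

theorem gfun_one : gfun K φ 1 = 1 := by
  rw [gfun_ne K φ 1 one_ne_zero]
  have h1 : Units.mk0 (1 : K) one_ne_zero = 1 := by ext; simp
  rw [h1, cls_one, map_zero]
  rfl

theorem gfun_mul (a b : K) : gfun K φ (a * b) = gfun K φ a * gfun K φ b := by
  by_cases ha : a = 0
  · simp [ha, gfun]
  by_cases hb : b = 0
  · simp [hb, gfun]
  have hab : a * b ≠ 0 := mul_ne_zero ha hb
  rw [gfun_ne K φ _ hab, gfun_ne K φ _ ha, gfun_ne K φ _ hb]
  have : Units.mk0 (a * b) hab = Units.mk0 a ha * Units.mk0 b hb := by ext; simp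
  rw [this, cls_mul, map_add, uu_add]

theorem gfun_sq (a b : K) (hb : b ≠ 0) : gfun K φ (a * b ^ 2) = gfun K φ a := by
  by_cases ha : a = 0
  · simp [ha, gfun]
  have hab : a * b ^ 2 ≠ 0 := mul_ne_zero ha (pow_ne_zero 2 hb)
  rw [gfun_ne K φ _ hab, gfun_ne K φ _ ha]
  have : Units.mk0 (a * b ^ 2) hab = Units.mk0 a ha * (Units.mk0 b hb) ^ 2 := by ext; simp
  rw [this, cls_mul, cls_sq, map_add, map_zero, add_zero]

theorem gfun_neg (hφ : φ (cls K (-1)) = 1) (a : K) (ha : a ≠ 0) :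
    gfun K φ (-a) = - gfun K φ a := by
  have hna : -a ≠ 0 := neg_ne_zero.mpr ha
  rw [gfun_ne K φ _ hna, gfun_ne K φ _ ha]
  have : Units.mk0 (-a) hna = (-1) * Units.mk0 a ha := by ext; simp
  rw [this, cls_mul, map_add, hφ, uu_one_add]

end WittAux

open MvPolynomial in
/-- Key separation: if `-1` is not a square in `K`, then `⟨-t⟩ ≠ ⟨t⟩` in the
presented Witt ring, for any `t ≠ 0`. -/
theorem wittGen_neg_ne (K : Type) [Field K] (hnsq : ¬ ∃ a : K, a ^ 2 = -1)
    (t : K) (ht : t ≠ 0) : WittGen K (-t) ≠ WittGen K t := by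
  classical
  -- the square class of -1 is nonzero
  have hv : cls K (-1) ≠ 0 := by
    intro h
    have h1 : ((-1 : Kˣ) : Kˣ ⧸ (powMonoidHom 2 : Kˣ →* Kˣ).range) = 1 :=
      congrArg Additive.toMul h
    obtain ⟨x, hx⟩ := (QuotientGroup.eq_one_iff _).mp h1
    rw [powMonoidHom_apply] at hx
    exact hnsq ⟨(x : K), by
      have : ((x ^ 2 : Kˣ) : K) = ((-1 : Kˣ) : K) := by rw [hx]
      simpa using this⟩
  obtain ⟨φ, hφ0⟩ : ∃ φ : Module.Dual (ZMod 2) (SqClass K), φ (cls K (-1)) ≠ 0 := by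
    by_contra h
    push_neg at h
    haveI : Module.Projective (ZMod 2) (SqClass K) := Module.Projective.of_free
    exact hv ((Module.forall_dual_apply_eq_zero_iff (ZMod 2) (cls K (-1))).mp h)
  have hφ : φ (cls K (-1)) = 1 := zmod2_eq_one hφ0
  set g := gfun K φ with hg
  -- the evaluation ring hom respects the Witt relations
  set E : MvPolynomial K ℤ →+* ZMod 4 := (eval₂Hom (Int.castRingHom (ZMod 4)) g : _) with hE
  have hEX : ∀ a : K, E (X a) = g a := fun a => by simp [hE]
  have hrel : ∀ ⦃x y⦄, WittRel K x y → E x = E y := by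
    intro x y h
    induction h with
    | zero => rw [hEX, map_zero]; simp [hg, gfun]
    | one => rw [hEX, map_one, hg, gfun_one]
    | mul a b => rw [map_mul, hEX, hEX, hEX, hg, gfun_mul]
    | sq a b hb => rw [hEX, hEX, hg, gfun_sq K φ a b hb]
    | neg a ha =>
        rw [map_add, map_zero, hEX, hEX, hg, gfun_neg K φ hφ a ha, add_neg_cancel]
    | add a b ha hb hab =>
        rw [map_add, map_mul, map_add, map_one, hEX, hEX, hEX, hEX, hg, gfun_mul,
          gfun_ne K φ a ha, gfun_ne K φ b hb, gfun_ne K φ (a + b) hab]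
        exact uu_witt _ _ _
  set ψ : WittRing K →+* ZMod 4 := RingQuot.lift ⟨E, hrel⟩ with hψ
  have hψgen : ∀ a : K, ψ (WittGen K a) = g a := by
    intro a
    rw [hψ, WittGen, RingQuot.lift_mkRingHom_apply, hEX]
  intro h
  have := congrArg ψ h
  rw [hψgen, hψgen, hg, gfun_neg K φ hφ t ht, gfun_ne K φ t ht] at this
  exact uu_ne_neg _ this.symm

/-- If K has Stufe exactly 2, there are anti-commuting
A, B ∈ SL(2,K) (with relevant 21-entries nonzero) such that
w(A,B) ≠ w(B,A) in W(K); hence the Witt cocycle on PSL(2,K) is not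
equicommutative. -/
theorem stmt15 (K : Type) [Field K] (hchar : (2 : K) ≠ 0)
    (hstufe2 : ∃ γ δ : K, γ ^ 2 + δ ^ 2 = -1)
    (hnsq : ¬ ∃ a : K, a ^ 2 = -1) :
    ∃ A B : Matrix.SpecialLinearGroup (Fin 2) K,
      (A : Matrix (Fin 2) (Fin 2) K) * (B : Matrix (Fin 2) (Fin 2) K) =
        -((B : Matrix (Fin 2) (Fin 2) K) * (A : Matrix (Fin 2) (Fin 2) K)) ∧
      (A : Matrix (Fin 2) (Fin 2) K) 1 0 ≠ 0 ∧
      (B : Matrix (Fin 2) (Fin 2) K) 1 0 ≠ 0 ∧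
      ((A * B : Matrix.SpecialLinearGroup (Fin 2) K) : Matrix (Fin 2) (Fin 2) K) 1 0 ≠ 0 ∧
      ((B * A : Matrix.SpecialLinearGroup (Fin 2) K) : Matrix (Fin 2) (Fin 2) K) 1 0 ≠ 0 ∧
      WittGen K (-((A : Matrix (Fin 2) (Fin 2) K) 1 0 *
          ((A * B : Matrix.SpecialLinearGroup (Fin 2) K) : Matrix (Fin 2) (Fin 2) K) 1 0 *
          (B : Matrix (Fin 2) (Fin 2) K) 1 0)) ≠
        WittGen K (-((B : Matrix (Fin 2) (Fin 2) K) 1 0 *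
          ((B * A : Matrix.SpecialLinearGroup (Fin 2) K) : Matrix (Fin 2) (Fin 2) K) 1 0 *
          (A : Matrix (Fin 2) (Fin 2) K) 1 0)) := by
  obtain ⟨γ, δ, hγδ⟩ := hstufe2
  have hγ : γ ≠ 0 := by
    intro h; exact hnsq ⟨δ, by rw [h] at hγδ; simpa using hγδ⟩
  have hδ : δ ≠ 0 := by
    intro h; exact hnsq ⟨γ, by rw [h] at hγδ; simpa using hγδ⟩
  refine ⟨⟨!![0, 1; -1, 0], by simp [Matrix.det_fin_two_of]⟩,
    ⟨!![γ, δ; δ, -γ], by simp [Matrix.det_fin_two_of]; linear_combination -hγδ⟩, ?_, ?_, ?_, ?_, ?_, ?_⟩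
  · show !![0, 1; -1, 0] * !![γ, δ; δ, -γ] = -(!![γ, δ; δ, -γ] * !![0, 1; -1, 0])
    ext i j
    fin_cases i <;> fin_cases j <;>
      simp [Matrix.mul_apply, Fin.sum_univ_two]
  · show !![(0 : K), 1; -1, 0] 1 0 ≠ 0
    simp
  · show !![γ, δ; δ, -γ] 1 0 ≠ 0
    simpa using hδ
  · show (!![(0 : K), 1; -1, 0] * !![γ, δ; δ, -γ]) 1 0 ≠ 0
    simp [Matrix.mul_apply, Fin.sum_univ_two]
    exact hγ
  · show (!![γ, δ; δ, -γ] * !![(0 : K), 1; -1, 0]) 1 0 ≠ 0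
    simp [Matrix.mul_apply, Fin.sum_univ_two]
    exact hγ
  · have e1 : (!![(0 : K), 1; -1, 0] * !![γ, δ; δ, -γ]) 1 0 = -γ := by
      simp [Matrix.mul_apply, Fin.sum_univ_two]
    have e2 : (!![γ, δ; δ, -γ] * !![(0 : K), 1; -1, 0]) 1 0 = γ := by
      simp [Matrix.mul_apply, Fin.sum_univ_two]
    show WittGen K (-(!![(0 : K), 1; -1, 0] 1 0 *
        (!![(0 : K), 1; -1, 0] * !![γ, δ; δ, -γ]) 1 0 * !![γ, δ; δ, -γ] 1 0)) ≠
      WittGen K (-(!![γ, δ; δ, -γ] 1 0 *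
        (!![γ, δ; δ, -γ] * !![(0 : K), 1; -1, 0]) 1 0 * !![(0 : K), 1; -1, 0] 1 0))
    rw [e1, e2]
    have eA : !![(0 : K), 1; -1, 0] 1 0 = -1 := by simp
    have eB : !![γ, δ; δ, -γ] 1 0 = δ := by simp
    rw [eA, eB]
    have h1 : -((-1 : K) * -γ * δ) = -(γ * δ) := by ring
    have h2 : -(δ * γ * (-1 : K)) = γ * δ := by ring
    rw [h1, h2]
    exact wittGen_neg_ne K hnsq (γ * δ) (mul_ne_zero hγ hδ)
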